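/- Fix 1 < p < ∞ and define f : ℓ_p → ℝ by f(x) = exp(−‖x‖_p^p). Then for every n ∈ ℕ, every compact set Ω ⊂ ℝⁿ and every ε > 0, there exist α > 0 and an injective affine map T : ℝⁿ → ℓ_p such that sup_{x∈Ω} | α f(T x) − φ_n(x) | < ε. -/

import Mathlib

set_option maxHeartbeats 1000000

open Real Filter

section Aux

lemma sum_pair' (F : ℕ → ℝ) (M : ℕ) :
    ∑ i ∈ Finset.range (2*M), F i = ∑ m ∈ Finset.range M, (F (2*m) + F (2*m+1)) := by
  induction M with
  | zero => simp
  | succ M ih =>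
    have : 2*(M+1) = (2*M + 1) + 1 := by ring
    rw [this, Finset.sum_range_succ, Finset.sum_range_succ, ih, Finset.sum_range_succ]
    ring

lemma sum_mod' (G : ℕ → ℝ) (N n : ℕ) :
    ∑ m ∈ Finset.range (N*n), G (m % n) = N * ∑ j ∈ Finset.range n, G j := by
  induction N with
  | zero => simp
  | succ N ih =>
    have h1 : (N+1)*n = N*n + n := by ring
    rw [h1, Finset.sum_range_add, ih]
    have : ∀ i ∈ Finset.range n, G ((N*n + i) % n) = G i := by
      intro i hi
      rw [Finset.mem_range] at hi
      congr 1
      rw [Nat.mul_comm, Nat.mul_add_mod]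
      exact Nat.mod_eq_of_lt hi
    rw [Finset.sum_congr rfl this]
    push_cast
    ring

lemma memlp_of_support {p : ℝ} (hp : 0 < p) (f : ℕ → ℝ) (m : ℕ)
    (hf : ∀ i, m ≤ i → f i = 0) : Memℓp f (ENNReal.ofReal p) := by
  apply memℓp_gen
  apply summable_of_ne_finset_zero (s := Finset.range m)
  intro i hi
  rw [Finset.mem_range, not_lt] at hi
  rw [hf i hi]
  rw [norm_zero, Real.zero_rpow]
  rw [ENNReal.toReal_ofReal hp.le]
  exact hp.ne'

/-- underlying linear map to sequences -/
noncomputable def auxL (n N : ℕ) (δ : ℝ) :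
    EuclideanSpace ℝ (Fin n) →ₗ[ℝ] (ℕ → ℝ) where
  toFun x i := if h : (i/2) % n < n ∧ i < 2*N*n then
      (-1:ℝ)^i * (δ * x ⟨(i/2)%n, h.1⟩) else 0
  map_add' x y := by
    funext i
    by_cases h : (i/2) % n < n ∧ i < 2*N*n
    · simp [h, PiLp.add_apply, mul_add]
    · simp [h]
  map_smul' c x := by
    funext i
    by_cases h : (i/2) % n < n ∧ i < 2*N*n
    · simp [h, PiLp.smul_apply, smul_eq_mul]
      ring
    · simp [h]

lemma auxL_support (n N : ℕ) (δ : ℝ) (x : EuclideanSpace ℝ (Fin n)) :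
    ∀ i, 2*N*n ≤ i → auxL n N δ x i = 0 := by
  intro i hi
  simp only [auxL, LinearMap.coe_mk, AddHom.coe_mk]
  rw [dif_neg]
  rintro ⟨-, h2⟩
  omega

/-- the linear map into lp -/
noncomputable def auxLlp (p : ℝ) (hp : 0 < p) (n N : ℕ) (δ : ℝ) :
    EuclideanSpace ℝ (Fin n) →ₗ[ℝ] lp (fun _ : ℕ => ℝ) (ENNReal.ofReal p) where
  toFun x := ⟨auxL n N δ x, memlp_of_support hp _ (2*N*n) (auxL_support n N δ x)⟩
  map_add' x y := Subtype.ext ((auxL n N δ).map_add x y)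
  map_smul' c x := Subtype.ext ((auxL n N δ).map_smul c x)

lemma auxLlp_coe (p : ℝ) (hp : 0 < p) (n N : ℕ) (δ : ℝ) (x : EuclideanSpace ℝ (Fin n)) :
    ⇑(auxLlp p hp n N δ x) = auxL n N δ x := rfl

noncomputable def auxv (p : ℝ) (hp : 0 < p) (n N : ℕ) :
    lp (fun _ : ℕ => ℝ) (ENNReal.ofReal p) :=
  ⟨fun i => if i < 2*N*n then (1:ℝ) else 0,
    memlp_of_support hp _ (2*N*n) (fun i hi => by simp; omega)⟩

lemma auxv_coe (p : ℝ) (hp : 0 < p) (n N : ℕ) :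
    ⇑(auxv p hp n N) = fun i => if i < 2*N*n then (1:ℝ) else 0 := rfl

lemma coord_le_norm {n : ℕ} (x : EuclideanSpace ℝ (Fin n)) (j : Fin n) : |x j| ≤ ‖x‖ := by
  rw [EuclideanSpace.norm_eq]
  have h1 : (x j)^2 ≤ ∑ i, ‖x i‖^2 := by
    have := Finset.single_le_sum (f := fun i => ‖x i‖^2)
      (fun i _ => sq_nonneg _) (Finset.mem_univ j)
    simpa [Real.norm_eq_abs, sq_abs] using this
  calc |x j| = Real.sqrt ((x j)^2) := (Real.sqrt_sq_eq_abs _).symm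
    _ ≤ _ := Real.sqrt_le_sqrt h1

lemma norm_sq_eq_sum {n : ℕ} (x : EuclideanSpace ℝ (Fin n)) :
    ‖x‖^2 = ∑ j, (x j)^2 := by
  rw [EuclideanSpace.norm_eq, Real.sq_sqrt]
  · simp [Real.norm_eq_abs, sq_abs]
  · positivity

end Aux

lemma tsum_formula (p : ℝ) (hp : 0 < p) (n N : ℕ) (δ : ℝ) (x : EuclideanSpace ℝ (Fin n)) :
    (∑' i : ℕ, |(auxLlp p hp n N δ x + auxv p hp n N :
        lp (fun _ : ℕ => ℝ) (ENNReal.ofReal p)) i| ^ p)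
      = N * ∑ j : Fin n, (|1 + δ * x j| ^ p + |1 - δ * x j| ^ p) := by
  have hcoe : ⇑(auxLlp p hp n N δ x + auxv p hp n N :
      lp (fun _ : ℕ => ℝ) (ENNReal.ofReal p)) = fun i => auxL n N δ x i +
        (if i < 2*N*n then (1:ℝ) else 0) := rfl
  rw [hcoe]
  set y : ℕ → ℝ := fun k => if h : k < n then x ⟨k, h⟩ else 0 with hy
  have hG : ∀ m, m < N*n →
      (|auxL n N δ x (2*m) + (if 2*m < 2*N*n then (1:ℝ) else 0)| ^ p
       + |auxL n N δ x (2*m+1) + (if 2*m+1 < 2*N*n then (1:ℝ) else 0)| ^ p)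
      = |1 + δ * y (m % n)| ^ p + |1 - δ * y (m % n)| ^ p := by
    intro m hm
    have hn : 0 < n := by
      rcases Nat.eq_zero_or_pos n with h0 | h0
      · subst h0; simp at hm
      · exact h0
    have hmn : m % n < n := Nat.mod_lt _ hn
    have h2 : 2*N*n = 2*(N*n) := by ring
    have hlt1 : 2*m < 2*N*n := by rw [h2]; omega
    have hlt2 : 2*m+1 < 2*N*n := by rw [h2]; omega
    have hdiv1 : (2*m)/2 = m := by omega
    have hdiv2 : (2*m+1)/2 = m := by omega
    have hpow1 : (-1:ℝ)^(2*m) = 1 := by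
      rw [pow_mul]; norm_num
    have hpow2 : (-1:ℝ)^(2*m+1) = -1 := by
      rw [pow_succ, hpow1]; norm_num
    simp only [auxL, LinearMap.coe_mk, AddHom.coe_mk]
    rw [dif_pos (by rw [hdiv1]; exact ⟨hmn, hlt1⟩), dif_pos (by rw [hdiv2]; exact ⟨hmn, hlt2⟩),
      if_pos hlt1, if_pos hlt2]
    have hyv : ∀ (h : (2*m)/2 % n < n), x ⟨(2*m)/2 % n, h⟩ = y (m % n) := by
      intro h
      simp only [hy]
      rw [dif_pos (by omega : m % n < n)]
      exact congrArg _ (Fin.ext (by show 2*m/2 % n = m % n; rw [hdiv1]))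
    have hyv2 : ∀ (h : (2*m+1)/2 % n < n), x ⟨(2*m+1)/2 % n, h⟩ = y (m % n) := by
      intro h
      simp only [hy]
      rw [dif_pos (by omega : m % n < n)]
      exact congrArg _ (Fin.ext (by show (2*m+1)/2 % n = m % n; rw [hdiv2]))
    rw [hyv, hyv2, hpow1, hpow2]
    congr 2
    · ring_nf
    · ring_nf
  have hzero : ∀ i ∉ Finset.range (2*(N*n)),
      |auxL n N δ x i + (if i < 2*N*n then (1:ℝ) else 0)| ^ p = 0 := by
    intro i hi
    rw [Finset.mem_range, not_lt] at hi
    have h2 : 2*N*n = 2*(N*n) := by ring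
    rw [auxL_support n N δ x i (by omega), if_neg (by omega)]
    simp [Real.zero_rpow hp.ne']
  have h5 : ∑ m ∈ Finset.range (N*n), (|1 + δ * y (m % n)| ^ p + |1 - δ * y (m % n)| ^ p)
      = N * ∑ j ∈ Finset.range n, (|1 + δ * y j| ^ p + |1 - δ * y j| ^ p) :=
    sum_mod' (fun k => |1 + δ * y k| ^ p + |1 - δ * y k| ^ p) N n
  rw [tsum_eq_sum hzero, sum_pair', Finset.sum_congr rfl
    (fun m hm => hG m (Finset.mem_range.1 hm)), h5]
  congr 1
  rw [← Fin.sum_univ_eq_sum_range (fun k => |1 + δ * y k| ^ p + |1 - δ * y k| ^ p) n]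
  apply Finset.sum_congr rfl
  intro j _
  have : y j.val = x j := by
    simp only [hy]
    rw [dif_pos j.isLt]
  rw [this]

lemma auxLlp_injective (p : ℝ) (hp : 0 < p) (n N : ℕ) (hN : 0 < N) (δ : ℝ) (hδ : δ ≠ 0) :
    Function.Injective (auxLlp p hp n N δ) := by
  intro x x' h
  have hcoords : ∀ i, auxL n N δ x i = auxL n N δ x' i := fun i =>
    congrFun (congrArg Subtype.val h) i
  ext j
  have hthis := hcoords (2*j.val)
  have h1 : (2*j.val)/2 = j.val := by omega
  have h2 : j.val % n = j.val := Nat.mod_eq_of_lt j.isLt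
  have hcond : (2*j.val)/2 % n < n ∧ 2*j.val < 2*N*n := by
    constructor
    · rw [h1, h2]; exact j.isLt
    · have hj := j.isLt
      have hnN : n ≤ N*n := Nat.le_mul_of_pos_left n hN
      have he : 2*N*n = 2*(N*n) := by ring
      omega
  simp only [auxL, LinearMap.coe_mk, AddHom.coe_mk] at hthis
  rw [dif_pos hcond, dif_pos hcond] at hthis
  have hfin : (⟨(2*j.val)/2 % n, hcond.1⟩ : Fin n) = j := Fin.ext (by simp only [Fin.val_mk]; rw [h1, h2])
  have hpow : (-1:ℝ)^(2*j.val) = 1 := by rw [pow_mul]; norm_num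
  rw [hpow, one_mul, one_mul] at hthis
  have hxx : x ⟨(2*j.val)/2 % n, hcond.1⟩ = x' ⟨(2*j.val)/2 % n, hcond.1⟩ :=
    mul_left_cancel₀ hδ hthis
  rw [← hfin]
  exact hxx
lemma lemA (p : ℝ) (hp : 1 < p) :
    Filter.Tendsto (fun t : ℝ => ((1+t)^p + (1-t)^p - 2) / t^2) (nhdsWithin 0 {(0:ℝ)}ᶜ)
      (nhds (p*(p-1))) := by
  have h1 : ∀ᶠ t : ℝ in nhds 0, t ∈ Set.Ioo (-1:ℝ) 1 :=
    Ioo_mem_nhds (by norm_num) (by norm_num)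
  have hff' : ∀ᶠ t : ℝ in nhds 0, HasDerivAt (fun t : ℝ => (1+t)^p + (1-t)^p - 2)
      (p*(1+t)^(p-1) - p*(1-t)^(p-1)) t := by
    filter_upwards [h1] with t ht
    have h1t : (0:ℝ) < 1 + t := by linarith [ht.1]
    have h2t : (0:ℝ) < 1 - t := by linarith [ht.2]
    have d1 : HasDerivAt (fun t : ℝ => (1+t)^p) (1 * p * (1+t)^(p-1)) t :=
      ((hasDerivAt_id t).const_add 1).rpow_const (Or.inl h1t.ne')
    have d2 : HasDerivAt (fun t : ℝ => (1-t)^p) ((-1) * p * (1-t)^(p-1)) t :=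
      ((hasDerivAt_id t).const_sub 1).rpow_const (Or.inl h2t.ne')
    have := (d1.add d2).sub_const 2
    exact this.congr_deriv (by ring)
  have hgg' : ∀ᶠ t : ℝ in nhds 0, HasDerivAt (fun t : ℝ => t^2) (2*t) t := by
    filter_upwards with t
    simpa using hasDerivAt_pow 2 t
  have hg' : ∀ᶠ t : ℝ in nhdsWithin (0:ℝ) {(0:ℝ)}ᶜ, 2*t ≠ 0 := by
    filter_upwards [self_mem_nhdsWithin] with t ht
    simpa using ht
  have hfa : Filter.Tendsto (fun t : ℝ => (1+t)^p + (1-t)^p - 2) (nhds 0) (nhds 0) := by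
    have : ContinuousAt (fun t : ℝ => (1+t)^p + (1-t)^p - 2) 0 := by
      apply ContinuousAt.sub _ continuousAt_const
      apply ContinuousAt.add
      · exact ((continuousAt_const.add continuousAt_id).rpow_const (by norm_num))
      · exact ((continuousAt_const.sub continuousAt_id).rpow_const (by norm_num))
    have h0 : (fun t : ℝ => (1+t)^p + (1-t)^p - 2) 0 = 0 := by
      norm_num [Real.one_rpow]
    have := this.tendsto
    convert this using 2
    norm_num [Real.one_rpow]
  have hga : Filter.Tendsto (fun t : ℝ => t^2) (nhds (0:ℝ)) (nhds 0) := by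
    simpa using (continuous_pow 2).tendsto (0:ℝ)
  -- derivative quotient limit
  have hw : HasDerivAt (fun t : ℝ => (1+t)^(p-1) - (1-t)^(p-1)) ((p-1) + (p-1)) 0 := by
    have d1 : HasDerivAt (fun t : ℝ => (1+t)^(p-1)) (1 * (p-1) * (1+(0:ℝ))^(p-1-1)) 0 :=
      ((hasDerivAt_id (0:ℝ)).const_add 1).rpow_const (Or.inl (by norm_num))
    have d2 : HasDerivAt (fun t : ℝ => (1-t)^(p-1)) ((-1) * (p-1) * (1-(0:ℝ))^(p-1-1)) 0 :=
      ((hasDerivAt_id (0:ℝ)).const_sub 1).rpow_const (Or.inl (by norm_num))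
    have := d1.sub d2
    exact this.congr_deriv (by rw [add_zero, sub_zero, Real.one_rpow]; ring)
  have hslope := hasDerivAt_iff_tendsto_slope.1 hw
  have hdiv : Filter.Tendsto (fun t : ℝ =>
      (p*(1+t)^(p-1) - p*(1-t)^(p-1)) / (2*t)) (nhdsWithin 0 {(0:ℝ)}ᶜ) (nhds (p*(p-1))) := by
    have h2 : Filter.Tendsto (fun t : ℝ => (p/2) * slope (fun t : ℝ => (1+t)^(p-1) - (1-t)^(p-1)) 0 t)
        (nhdsWithin 0 {(0:ℝ)}ᶜ) (nhds ((p/2) * ((p-1)+(p-1)))) := hslope.const_mul (p/2)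
    have heq : ∀ᶠ t : ℝ in nhdsWithin (0:ℝ) {(0:ℝ)}ᶜ,
        (p/2) * slope (fun t : ℝ => (1+t)^(p-1) - (1-t)^(p-1)) 0 t
          = (p*(1+t)^(p-1) - p*(1-t)^(p-1)) / (2*t) := by
      filter_upwards [self_mem_nhdsWithin] with t ht
      have ht' : t ≠ 0 := by simpa using ht
      rw [slope_def_field]
      norm_num [Real.one_rpow]
      field_simp
    have := h2.congr' heq
    convert this using 2
    ring
  exact HasDerivAt.lhopital_zero_nhdsNE (hff'.filter_mono nhdsWithin_le_nhds) (hgg'.filter_mono nhdsWithin_le_nhds) hg' 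
    (hfa.mono_left nhdsWithin_le_nhds) (hga.mono_left nhdsWithin_le_nhds) hdiv

/-- The standard Gaussian density `φ_k(x) = (2π)^{-k/2} exp(-‖x‖²/2)` on `ℝ^k`. -/
noncomputable def gaussDensity (k : ℕ) (x : EuclideanSpace ℝ (Fin k)) : ℝ :=
  (2 * Real.pi) ^ (-(k : ℝ) / 2) * Real.exp (-‖x‖ ^ 2 / 2)

/-- Corollary in the paper. For `1 < p < ∞` and
`f : ℓ_p → ℝ`, `f(x) = exp(-‖x‖_p^p) = exp(-∑ᵢ |xᵢ|^p)`: for every `n`, every compact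
`Ω ⊂ ℝⁿ` and every `ε > 0`, there are `α > 0` and an injective affine map
`T = L + v : ℝⁿ → ℓ_p` with `sup_{x ∈ Ω} |α f(Tx) - φ_n(x)| < ε`. -/
theorem section_clt_lp (p : ℝ) (hp : 1 < p) (n : ℕ)
    (Ω : Set (EuclideanSpace ℝ (Fin n))) (hΩ : IsCompact Ω) (ε : ℝ) (hε : 0 < ε) :
    ∃ α > (0 : ℝ),
      ∃ L : EuclideanSpace ℝ (Fin n) →ₗ[ℝ] lp (fun _ : ℕ => ℝ) (ENNReal.ofReal p),
        Function.Injective L ∧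
        ∃ v : lp (fun _ : ℕ => ℝ) (ENNReal.ofReal p),
          ∀ x ∈ Ω,
            |α * Real.exp (-(∑' i : ℕ, |(L x + v : lp (fun _ : ℕ => ℝ) (ENNReal.ofReal p)) i| ^ p))
              - gaussDensity n x| < ε := by
  have hp0 : (0:ℝ) < p := lt_trans one_pos hp
  obtain ⟨pp, hpp⟩ : ∃ pp : ℝ, pp = p * (p - 1) := ⟨_, rfl⟩
  have hpppos : 0 < pp := by rw [hpp]; exact mul_pos hp0 (by linarith)
  obtain ⟨r0, hr0⟩ := hΩ.isBounded.subset_closedBall 0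
  obtain ⟨R, hR⟩ : ∃ R : ℝ, R = max r0 1 := ⟨_, rfl⟩
  have hRpos : (0:ℝ) < R := by rw [hR]; exact lt_of_lt_of_le one_pos (le_max_right _ _)
  have hxR : ∀ x ∈ Ω, ‖x‖ ≤ R := by
    intro x hx
    have := hr0 hx
    rw [Metric.mem_closedBall, dist_zero_right] at this
    rw [hR]
    exact le_trans this (le_max_left _ _)
  obtain ⟨c, hc⟩ : ∃ c : ℝ, c = (2 * Real.pi) ^ (-(n : ℝ) / 2) := ⟨_, rfl⟩
  have hcpos : 0 < c := by rw [hc]; exact Real.rpow_pos_of_pos (by positivity) _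
  obtain ⟨κ, hκ⟩ : ∃ κ : ℝ, κ = min 1 (ε / (2 * c * Real.exp 1)) := ⟨_, rfl⟩
  have hκpos : 0 < κ := by rw [hκ]; exact lt_min one_pos (by positivity)
  obtain ⟨η, hη⟩ : ∃ η : ℝ, η = κ * (2 * pp) / ((n + 1) * R ^ 2) := ⟨_, rfl⟩
  have hηpos : 0 < η := by rw [hη]; positivity
  have hlim := lemA p hp
  rw [Metric.tendsto_nhdsWithin_nhds] at hlim
  obtain ⟨d, hdpos, hd⟩ := hlim η hηpos
  obtain ⟨r, hrdef⟩ : ∃ r : ℝ, r = min (d/2) (1/2) := ⟨_, rfl⟩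
  have hrpos : 0 < r := by rw [hrdef]; exact lt_min (by linarith) (by norm_num)
  have hr12 : r ≤ 1/2 := by rw [hrdef]; exact min_le_right _ _
  have hrd : r < d := by rw [hrdef]; exact lt_of_le_of_lt (min_le_left _ _) (by linarith)
  obtain ⟨N₀, hN₀⟩ := exists_nat_ge (R^2 / (2 * pp * r^2))
  obtain ⟨N, hNdef⟩ : ∃ N : ℕ, N = N₀ + 1 := ⟨_, rfl⟩
  have hNpos : 0 < N := by rw [hNdef]; exact Nat.succ_pos _
  have hNposR : (0:ℝ) < N := by exact_mod_cast hNpos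
  have hNge : R^2 / (2 * pp * r^2) ≤ (N:ℝ) := by
    rw [hNdef]
    exact le_trans hN₀ (by exact_mod_cast Nat.le_succ _)
  obtain ⟨δ, hδdef⟩ : ∃ δ : ℝ, δ = Real.sqrt (1 / (2 * N * pp)) := ⟨_, rfl⟩
  have hδpos : 0 < δ := by rw [hδdef]; exact Real.sqrt_pos.2 (by positivity)
  have hδsq : δ^2 = 1 / (2 * N * pp) := by rw [hδdef]; exact Real.sq_sqrt (by positivity)
  have hNδ : (N:ℝ) * δ^2 = 1/(2*pp) := by
    rw [hδsq]
    field_simp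
  have hδR : δ * R ≤ r := by
    have hsq : (δ * R)^2 ≤ r^2 := by
      have h1 : R^2 ≤ (N:ℝ) * (2 * pp * r^2) := by
        rw [div_le_iff₀ (by positivity)] at hNge
        linarith
      have h2 : (δ*R)^2 = R^2 / (2 * (N:ℝ) * pp) := by
        rw [mul_pow, hδsq]; ring
      rw [h2, div_le_iff₀ (by positivity)]
      nlinarith
    calc δ * R = Real.sqrt ((δ*R)^2) := (Real.sqrt_sq (by positivity)).symm
      _ ≤ Real.sqrt (r^2) := Real.sqrt_le_sqrt hsq
      _ = r := Real.sqrt_sq hrpos.le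
  refine ⟨c * Real.exp (2*N*n), by positivity, auxLlp p hp0 n N δ,
    auxLlp_injective p hp0 n N hNpos δ hδpos.ne', auxv p hp0 n N, ?_⟩
  intro x hx
  rw [tsum_formula p hp0 n N δ x]
  have hxj : ∀ j : Fin n, |δ * x j| ≤ r := by
    intro j
    rw [abs_mul, abs_of_pos hδpos]
    calc δ * |x j| ≤ δ * R :=
          mul_le_mul_of_nonneg_left (le_trans (coord_le_norm x j) (hxR x hx)) hδpos.le
      _ ≤ r := hδR
  have habs : ∀ j : Fin n,
      |1 + δ * x j| ^ p + |1 - δ * x j| ^ p = (1 + δ * x j) ^ p + (1 - δ * x j) ^ p := by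
    intro j
    have h := abs_le.1 (le_trans (hxj j) hr12)
    rw [abs_of_pos (by linarith), abs_of_pos (by linarith)]
  rw [Finset.sum_congr rfl (fun j _ => habs j)]
  -- key per-coordinate estimate
  have hkey : ∀ j : Fin n,
      |(N:ℝ) * ((1 + δ * x j)^p + (1 - δ * x j)^p - 2) - (x j)^2/2|
        ≤ (x j)^2 * η / (2*pp) := by
    intro j
    by_cases hx0 : x j = 0
    · rw [hx0]
      norm_num [Real.one_rpow]
    · set t := δ * x j with htdef
      have ht0 : t ≠ 0 := mul_ne_zero hδpos.ne' hx0
      have htr : |t| ≤ r := hxj j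
      have hq : |((1+t)^p + (1-t)^p - 2)/t^2 - pp| ≤ η := by
        have := hd (x := t) (by simpa using ht0)
          (by rw [Real.dist_eq, sub_zero]; exact lt_of_le_of_lt htr hrd)
        rw [Real.dist_eq] at this
        rw [hpp]
        exact this.le
      set q := ((1+t)^p + (1-t)^p - 2)/t^2 with hqdef
      have hdecomp : (1+t)^p + (1-t)^p - 2 = q * t^2 := by
        rw [hqdef]
        field_simp
      have hmain : (N:ℝ) * ((1 + t)^p + (1 - t)^p - 2) - (x j)^2/2
          = (x j)^2/(2*pp) * (q - pp) := by
        rw [hdecomp]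
        have e1 : (N:ℝ) * (q * t^2) = ((N:ℝ) * δ^2) * (q * (x j)^2) := by
          rw [htdef]; ring
        rw [e1, hNδ]
        field_simp
      rw [hmain, abs_mul, abs_of_nonneg (by positivity : (0:ℝ) ≤ (x j)^2/(2*pp))]
      calc (x j)^2/(2*pp) * |q - pp| ≤ (x j)^2/(2*pp) * η :=
            mul_le_mul_of_nonneg_left hq (by positivity)
        _ = (x j)^2 * η / (2*pp) := by ring
  -- total estimate
  set T := ∑ j : Fin n, ((1 + δ * x j) ^ p + (1 - δ * x j) ^ p) with hT
  set A := (N:ℝ) * T - 2*N*n with hA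
  set B := ‖x‖^2/2 with hB
  have hAB : |A - B| ≤ κ := by
    have hsplit : A - B = ∑ j : Fin n,
        ((N:ℝ) * ((1 + δ * x j)^p + (1 - δ * x j)^p - 2) - (x j)^2/2) := by
      rw [hA, hB, hT, norm_sq_eq_sum]
      rw [Finset.sum_sub_distrib, ← Finset.mul_sum, Finset.sum_sub_distrib,
        Finset.sum_const, Finset.card_univ, Fintype.card_fin, ← Finset.sum_div]
      push_cast
      ring
    rw [hsplit]
    calc |∑ j : Fin n, ((N:ℝ) * ((1 + δ * x j)^p + (1 - δ * x j)^p - 2) - (x j)^2/2)|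
        ≤ ∑ j : Fin n, |(N:ℝ) * ((1 + δ * x j)^p + (1 - δ * x j)^p - 2) - (x j)^2/2| :=
          Finset.abs_sum_le_sum_abs _ _
      _ ≤ ∑ j : Fin n, (x j)^2 * η / (2*pp) := Finset.sum_le_sum (fun j _ => hkey j)
      _ = (∑ j : Fin n, (x j)^2) * η / (2*pp) := by
          rw [← Finset.sum_div, ← Finset.sum_mul]
      _ = ‖x‖^2 * η / (2*pp) := by rw [norm_sq_eq_sum]
      _ ≤ R^2 * η / (2*pp) := by
          have : ‖x‖^2 ≤ R^2 := by nlinarith [norm_nonneg x, hxR x hx]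
          gcongr
      _ = κ / (n+1) := by
          rw [hη]
          field_simp
      _ ≤ κ := by
          rw [div_le_iff₀ (by positivity)]
          nlinarith [hκpos]
  set E := B - A with hE
  have hEκ : |E| ≤ κ := by rw [hE, abs_sub_comm]; exact hAB
  have hexp1 : |Real.exp E - 1| ≤ Real.exp κ - 1 := by
    rcases le_or_gt 0 E with hE0 | hE0
    · rw [abs_of_nonneg (by linarith [Real.one_le_exp hE0])]
      have : E ≤ κ := le_trans (le_abs_self E) hEκ
      linarith [Real.exp_le_exp.2 this]
    · have hexpE : Real.exp E ≤ 1 := Real.exp_le_one_iff.2 hE0.le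
      rw [abs_of_nonpos (by linarith)]
      have hEκ' : -κ ≤ E := neg_le_of_abs_le hEκ
      have h3 : Real.exp (-κ) ≤ Real.exp E := Real.exp_le_exp.2 hEκ'
      have h4 : Real.exp κ * Real.exp (-κ) = 1 := by
        rw [← Real.exp_add]; simp
      nlinarith [Real.exp_pos κ, sq_nonneg (Real.exp κ - 1)]
  have hexp2 : Real.exp κ - 1 ≤ κ * Real.exp 1 := by
    have ha := Real.add_one_le_exp (-κ)
    have hκ1 : κ ≤ 1 := by rw [hκ]; exact min_le_left _ _
    have hb : Real.exp κ ≤ Real.exp 1 := Real.exp_le_exp.2 hκ1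
    have h4 : Real.exp κ * Real.exp (-κ) = 1 := by
      rw [← Real.exp_add]; simp
    nlinarith [Real.exp_pos κ]
  have hrepr : c * Real.exp (2*N*n) * Real.exp (-((N:ℝ) * T)) = c * Real.exp (-B) * Real.exp E := by
    rw [mul_assoc c, ← Real.exp_add, mul_assoc c, ← Real.exp_add]
    congr 1
    rw [hE, hA]
    push_cast
    ring
  have hgauss : gaussDensity n x = c * Real.exp (-B) := by
    rw [gaussDensity, hB, hc]
    ring_nf
  rw [hrepr, hgauss]
  have hBnn : 0 ≤ B := by rw [hB]; positivity
  have hexpB : Real.exp (-B) ≤ 1 := Real.exp_le_one_iff.2 (by linarith)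
  have hfinal : |c * Real.exp (-B) * Real.exp E - c * Real.exp (-B)|
      = c * Real.exp (-B) * |Real.exp E - 1| := by
    rw [show c * Real.exp (-B) * Real.exp E - c * Real.exp (-B)
        = c * Real.exp (-B) * (Real.exp E - 1) from by ring, abs_mul,
      abs_of_pos (by positivity)]
  rw [hfinal]
  calc c * Real.exp (-B) * |Real.exp E - 1|
      ≤ c * 1 * (Real.exp κ - 1) := by
        apply mul_le_mul _ hexp1 (abs_nonneg _) (by positivity)
        nlinarith [Real.exp_pos (-B), hcpos]
    _ ≤ c * (κ * Real.exp 1) := by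
        rw [mul_one]
        exact mul_le_mul_of_nonneg_left hexp2 hcpos.le
    _ ≤ c * ((ε / (2 * c * Real.exp 1)) * Real.exp 1) := by
        have hκ2 : κ ≤ ε / (2 * c * Real.exp 1) := by rw [hκ]; exact min_le_right _ _
        have he1 : (0:ℝ) < Real.exp 1 := Real.exp_pos 1
        exact mul_le_mul_of_nonneg_left (mul_le_mul_of_nonneg_right hκ2 he1.le) hcpos.le
    _ = ε / 2 := by
        field_simp
    _ < ε := by linarith
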